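/- Let A : ℝ → M₂(ℝ) be continuous with ‖A(s)‖ ≤ C₀ < 1 for all s, and consider the matrix Riccati-type system on 2×2 symmetric trace-free matrices: Θ' = -Θ²/2 - Tr(S²), S' = -ΘS + A(s), with initial data Θ(0) = Θ₀ > 0, S(0) = 0. Then the solution exists and Θ(s) > 0 on [0, T] whenever T ≤ c·min(Θ₀, Θ₀⁻¹, C₀^{-1/2}) for a universal constant c > 0. -/

import Mathlib

open Set

private lemma exp_aux {y : ℝ} (h0 : 0 ≤ y) (h1 : y ≤ 1) : Real.exp y - 1 ≤ 3 * y := by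
  have h2 : -y + 1 ≤ Real.exp (-y) := Real.add_one_le_exp (-y)
  have h3 : Real.exp y * Real.exp (-y) = 1 := by
    rw [← Real.exp_add]; simp
  have h4 : Real.exp y ≤ Real.exp 1 := Real.exp_le_exp.2 h1
  have h5 : Real.exp 1 < 2.7182818286 := Real.exp_one_lt_d9
  have h6 : 0 < Real.exp y := Real.exp_pos y
  nlinarith [mul_le_mul_of_nonneg_left h2 h6.le]

private lemma derivIci {f : ℝ → ℝ} {f' T x : ℝ} (hx : x ∈ Ico 0 T)
    (h : HasDerivWithinAt f f' (Icc 0 T) x) : HasDerivWithinAt f f' (Ici x) x :=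
  h.mono_of_mem_nhdsWithin (Icc_mem_nhdsGE_of_mem hx)

set_option maxHeartbeats 1000000 in
theorem stmt_19 :
    ∃ c : ℝ, 0 < c ∧
      ∀ (Θ : ℝ → ℝ) (S A : ℝ → Fin 2 → Fin 2 → ℝ) (Θ₀ C₀ T : ℝ),
        0 < Θ₀ → 0 < C₀ → C₀ < 1 →
        Continuous A →
        (∀ s i j, |A s i j| ≤ C₀) →
        (∀ s i j, A s i j = A s j i) →
        (∀ s, A s 0 0 + A s 1 1 = 0) →
        (∀ s ∈ Icc (0 : ℝ) T, HasDerivWithinAt Θ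
          (-(Θ s) ^ 2 / 2 - ∑ i, ∑ j, S s i j * S s j i) (Icc (0 : ℝ) T) s) →
        (∀ i j, ∀ s ∈ Icc (0 : ℝ) T, HasDerivWithinAt (fun u => S u i j)
          (-(Θ s) * S s i j + A s i j) (Icc (0 : ℝ) T) s) →
        Θ 0 = Θ₀ → (∀ i j, S 0 i j = 0) →
        0 ≤ T → T ≤ c * min (min Θ₀ Θ₀⁻¹) (Real.sqrt C₀)⁻¹ →
        ∀ s ∈ Icc (0 : ℝ) T, 0 < Θ s := by
  refine ⟨1/10, by norm_num, ?_⟩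
  intro Θ S A Θ₀ C₀ T hΘ₀ hC₀ hC₀1 hAcont hAbd hAsymm hAtr hΘ' hS' hΘinit hSinit hT0 hTle
  have hsqrtpos : 0 < Real.sqrt C₀ := Real.sqrt_pos.2 hC₀
  -- the three consequences of the smallness of T
  have hT1 : T ≤ Θ₀ / 10 := by
    have h1 : min (min Θ₀ Θ₀⁻¹) (Real.sqrt C₀)⁻¹ ≤ Θ₀ :=
      le_trans (min_le_left _ _) (min_le_left _ _)
    nlinarith [hTle]
  have hT2 : T * Θ₀ ≤ 1/10 := by
    have h1 : min (min Θ₀ Θ₀⁻¹) (Real.sqrt C₀)⁻¹ ≤ Θ₀⁻¹ :=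
      le_trans (min_le_left _ _) (min_le_right _ _)
    have h2 : T ≤ (1/10) * Θ₀⁻¹ := le_trans hTle (by nlinarith)
    have h3 : T * Θ₀ ≤ (1/10) * Θ₀⁻¹ * Θ₀ := by nlinarith
    rwa [mul_assoc, inv_mul_cancel₀ hΘ₀.ne', mul_one] at h3
  have hT3 : Real.sqrt C₀ * T ≤ 1/10 := by
    have h1 : min (min Θ₀ Θ₀⁻¹) (Real.sqrt C₀)⁻¹ ≤ (Real.sqrt C₀)⁻¹ := min_le_right _ _
    have h2 : T ≤ (1/10) * (Real.sqrt C₀)⁻¹ := le_trans hTle (by nlinarith)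
    have h3 : Real.sqrt C₀ * T ≤ Real.sqrt C₀ * ((1/10) * (Real.sqrt C₀)⁻¹) := by
      nlinarith
    rwa [← mul_assoc, mul_comm (Real.sqrt C₀) (1/10 : ℝ), mul_assoc,
      mul_inv_cancel₀ hsqrtpos.ne', mul_one] at h3
  have hCT2 : C₀ * T ^ 2 ≤ 1/100 := by
    have := Real.sq_sqrt hC₀.le
    nlinarith [mul_nonneg hsqrtpos.le hT0, hT3]
  -- continuity
  have hΘcont : ContinuousOn Θ (Icc 0 T) := fun s hs => (hΘ' s hs).continuousWithinAt
  have hScont : ∀ i j, ContinuousOn (fun u => S u i j) (Icc 0 T) :=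
    fun i j s hs => (hS' i j s hs).continuousWithinAt
  -- symmetry of S on [0,T]
  have hSsymm : ∀ u ∈ Icc (0:ℝ) T, ∀ i j, S u j i = S u i j := by
    obtain ⟨K, hK⟩ := isCompact_Icc.exists_bound_of_continuousOn hΘcont
    intro u hu i j
    have key := norm_le_gronwallBound_of_norm_deriv_right_le
      (f := fun u => S u i j - S u j i)
      (f' := fun x => -(Θ x) * (S x i j - S x j i)) (δ := 0) (K := K) (ε := 0)
      (a := 0) (b := T)
      (((hScont i j).sub (hScont j i)))
      (fun x hx => by
        have h1 := (hS' i j x (Ico_subset_Icc_self hx)).sub (hS' j i x (Ico_subset_Icc_self hx))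
        have h2 : (-(Θ x) * S x i j + A x i j) - (-(Θ x) * S x j i + A x j i)
            = -(Θ x) * (S x i j - S x j i) := by rw [hAsymm x i j]; ring
        show HasDerivWithinAt _ (-(Θ x) * (S x i j - S x j i)) (Ici x) x
        rw [← h2]
        exact derivIci hx h1)
      (by simp [hSinit])
      (fun x hx => by
        have : ‖-(Θ x) * (S x i j - S x j i)‖ = |Θ x| * ‖S x i j - S x j i‖ := by
          rw [Real.norm_eq_abs, Real.norm_eq_abs, abs_mul, abs_neg]
        rw [this, add_zero]
        exact mul_le_mul_of_nonneg_right (hK x (Ico_subset_Icc_self hx)) (norm_nonneg _))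
      u hu
    rw [gronwallBound_ε0_δ0] at key
    have : S u i j - S u j i = 0 := by
      have := norm_nonneg (S u i j - S u j i)
      have h0 : ‖S u i j - S u j i‖ = 0 := le_antisymm key this
      exact norm_eq_zero.1 h0
    linarith [this]
  -- the trace term is a sum of squares
  have hSum : ∀ u ∈ Icc (0:ℝ) T,
      (∑ i, ∑ j, S u i j * S u j i) = ∑ i, ∑ j, (S u i j) ^ 2 := by
    intro u hu
    refine Finset.sum_congr rfl fun i _ => Finset.sum_congr rfl fun j _ => ?_
    rw [hSsymm u hu i j]; ring
  have hSumNonneg : ∀ u ∈ Icc (0:ℝ) T, 0 ≤ ∑ i, ∑ j, S u i j * S u j i := by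
    intro u hu; rw [hSum u hu]; positivity
  -- Θ is antitone, hence bounded above by Θ₀
  have hAnti : AntitoneOn Θ (Icc 0 T) := by
    have hderiv : ∀ x ∈ Ioo (0:ℝ) T, HasDerivAt Θ
        (-(Θ x) ^ 2 / 2 - ∑ i, ∑ j, S x i j * S x j i) x := fun x hx =>
      (hΘ' x (Ioo_subset_Icc_self hx)).hasDerivAt (Icc_mem_nhds hx.1 hx.2)
    refine antitoneOn_of_deriv_nonpos (convex_Icc 0 T) hΘcont ?_ ?_
    · rw [interior_Icc]
      exact fun x hx => (hderiv x hx).differentiableAt.differentiableWithinAt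
    · rw [interior_Icc]
      intro x hx
      rw [(hderiv x hx).deriv]
      have := hSumNonneg x (Ioo_subset_Icc_self hx)
      nlinarith [sq_nonneg (Θ x)]
  have hΘle : ∀ u ∈ Icc (0:ℝ) T, Θ u ≤ Θ₀ := by
    intro u hu
    have := hAnti (left_mem_Icc.2 hT0) hu hu.1
    rwa [hΘinit] at this
  -- main argument by contradiction
  by_contra hcon
  push_neg at hcon
  obtain ⟨s₀, hs₀, hΘs₀⟩ := hcon
  set E := Icc (0:ℝ) T ∩ Θ ⁻¹' (Iic (Θ₀/2)) with hE
  have hEne : E.Nonempty := ⟨s₀, hs₀, by simp only [mem_preimage, mem_Iic]; linarith⟩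
  have hEclosed : IsClosed E := hΘcont.preimage_isClosed_of_isClosed isClosed_Icc isClosed_Iic
  have hEbdd : BddBelow E := (bddBelow_Icc : BddBelow (Icc (0:ℝ) T)).mono (inter_subset_left)
  set t := sInf E with htdef
  have htE : t ∈ E := hEclosed.csInf_mem hEne hEbdd
  have htT : t ∈ Icc 0 T := htE.1
  have hΘt : Θ t ≤ Θ₀ / 2 := htE.2
  -- strictly before t, Θ > Θ₀/2
  have hlow : ∀ x ∈ Ico (0:ℝ) t, Θ₀ / 2 < Θ x := by
    intro x hx
    by_contra h
    push_neg at h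
    have hxE : x ∈ E := ⟨⟨hx.1, le_trans hx.2.le htT.2⟩, h⟩
    exact absurd (csInf_le hEbdd hxE) (not_le.2 hx.2)
  -- Grönwall bound for S on [0, t]
  have hSbd : ∀ i j, ∀ x ∈ Icc (0:ℝ) t, |S x i j| ≤ 3 * C₀ * x := by
    intro i j
    have key := norm_le_gronwallBound_of_norm_deriv_right_le
      (f := fun u => S u i j) (f' := fun x => -(Θ x) * S x i j + A x i j)
      (δ := 0) (K := Θ₀) (ε := C₀) (a := 0) (b := t)
      ((hScont i j).mono (Icc_subset_Icc_right htT.2))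
      (fun x hx => derivIci ⟨hx.1, lt_of_lt_of_le hx.2 htT.2⟩
        (hS' i j x ⟨hx.1, le_trans hx.2.le htT.2⟩))
      (by simp [hSinit])
      (fun x hx => by
        have hxIccT : x ∈ Icc (0:ℝ) T := ⟨hx.1, le_trans hx.2.le htT.2⟩
        have h1 : 0 < Θ x := lt_of_le_of_lt (by positivity) (hlow x hx)
        have h2 : Θ x ≤ Θ₀ := hΘle x hxIccT
        calc ‖-(Θ x) * S x i j + A x i j‖
            ≤ ‖-(Θ x) * S x i j‖ + ‖A x i j‖ := norm_add_le _ _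
          _ ≤ Θ₀ * ‖S x i j‖ + C₀ := by
              rw [Real.norm_eq_abs, Real.norm_eq_abs, Real.norm_eq_abs, abs_mul, abs_neg,
                abs_of_pos h1]
              exact add_le_add (mul_le_mul_of_nonneg_right h2 (abs_nonneg _)) (hAbd x i j))
    intro x hx
    have hkx := key x hx
    rw [gronwallBound_of_K_ne_0 hΘ₀.ne'] at hkx
    have hx1 : Θ₀ * (x - 0) ≤ 1 := by
      have : x ≤ T := le_trans hx.2 htT.2
      nlinarith
    have hexp : Real.exp (Θ₀ * (x - 0)) - 1 ≤ 3 * (Θ₀ * (x - 0)) :=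
      exp_aux (by nlinarith [hx.1]) hx1
    have hfin : C₀ / Θ₀ * (Real.exp (Θ₀ * (x - 0)) - 1) ≤ 3 * C₀ * x := by
      have h1 : C₀ / Θ₀ * (Real.exp (Θ₀ * (x - 0)) - 1) ≤ C₀ / Θ₀ * (3 * (Θ₀ * (x - 0))) := by
        have : 0 ≤ C₀ / Θ₀ := by positivity
        nlinarith
      have h2 : C₀ / Θ₀ * (3 * (Θ₀ * (x - 0))) = 3 * C₀ * x := by
        field_simp; ring
      linarith
    rw [Real.norm_eq_abs] at hkx
    calc |S x i j| ≤ 0 * Real.exp (Θ₀ * (x - 0))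
          + C₀ / Θ₀ * (Real.exp (Θ₀ * (x - 0)) - 1) := hkx
      _ = C₀ / Θ₀ * (Real.exp (Θ₀ * (x - 0)) - 1) := by ring
      _ ≤ 3 * C₀ * x := hfin
  -- monotonicity of Θ u + M u on [0,t]
  set M : ℝ := Θ₀ ^ 2 / 2 + 36 * C₀ ^ 2 * T ^ 2 with hM
  have hMpos : 0 < M := by positivity
  have hmono : MonotoneOn (fun u => Θ u + M * u) (Icc 0 t) := by
    have hderiv : ∀ x ∈ Ioo (0:ℝ) t, HasDerivAt (fun u => Θ u + M * u)
        ((-(Θ x) ^ 2 / 2 - ∑ i, ∑ j, S x i j * S x j i) + M) x := by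
      intro x hx
      have hx' : x ∈ Icc (0:ℝ) T := ⟨hx.1.le, le_trans hx.2.le htT.2⟩
      have h1 : HasDerivAt Θ (-(Θ x) ^ 2 / 2 - ∑ i, ∑ j, S x i j * S x j i) x :=
        (hΘ' x hx').hasDerivAt (Icc_mem_nhds hx.1 (lt_of_lt_of_le hx.2 htT.2))
      have h2 : HasDerivAt (fun u => M * u) M x := by
        simpa using (hasDerivAt_id x).const_mul M
      exact h1.add h2
    refine monotoneOn_of_deriv_nonneg (convex_Icc 0 t)
      ((hΘcont.mono (Icc_subset_Icc_right htT.2)).add (by fun_prop)) ?_ ?_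
    · rw [interior_Icc]
      exact fun x hx => (hderiv x hx).differentiableAt.differentiableWithinAt
    · rw [interior_Icc]
      intro x hx
      rw [(hderiv x hx).deriv]
      have hx' : x ∈ Icc (0:ℝ) T := ⟨hx.1.le, le_trans hx.2.le htT.2⟩
      have hxt : x ∈ Icc (0:ℝ) t := Ioo_subset_Icc_self hx
      -- bound the sum of squares
      have hb : ∀ i j, |S x i j| ≤ 3 * C₀ * T := fun i j =>
        le_trans (hSbd i j x hxt) (by nlinarith [le_trans hx.2.le htT.2, hx.1.le])
      have hΘxle : Θ x ≤ Θ₀ := hΘle x hx'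
      have hΘxpos : 0 < Θ x :=
        lt_of_le_of_lt (by positivity) (hlow x ⟨hx.1.le, hx.2⟩)
      rw [hSum x hx', Fin.sum_univ_two, Fin.sum_univ_two, Fin.sum_univ_two]
      have h00 := hb 0 0; have h01 := hb 0 1; have h10 := hb 1 0; have h11 := hb 1 1
      rw [hM]
      nlinarith [sq_abs (S x 0 0), sq_abs (S x 0 1), sq_abs (S x 1 0), sq_abs (S x 1 1),
        abs_nonneg (S x 0 0), abs_nonneg (S x 0 1), abs_nonneg (S x 1 0), abs_nonneg (S x 1 1),
        mul_nonneg (mul_nonneg (by norm_num : (0:ℝ) ≤ 3) hC₀.le) hT0]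
  -- derive the contradiction
  have hkey : Θ 0 + M * 0 ≤ Θ t + M * t :=
    hmono (left_mem_Icc.2 htT.1) (right_mem_Icc.2 htT.1) htT.1
  rw [hΘinit, mul_zero, add_zero] at hkey
  have hMt : M * t ≤ M * T := mul_le_mul_of_nonneg_left htT.2 hMpos.le
  have hMT : M * T < Θ₀ / 2 := by
    rw [hM]
    have h1 : Θ₀ ^ 2 / 2 * T ≤ Θ₀ / 20 := by nlinarith
    have h2 : 36 * C₀ ^ 2 * T ^ 2 * T ≤ 36 * (1/100) * (Θ₀ / 10) := by
      nlinarith [sq_nonneg T, mul_nonneg hC₀.le hT0]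
    nlinarith
  clear_value M t
  linarith [hkey, hΘt, hMt, hMT]
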